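/- Let z ∈ N(R̂) = {z ∈ B̂^× : z⁻¹ R̂ z = R̂}, and let φ, ψ be quaternionic modular forms of weight ρ and level R. Assume Cl(R) is finite and every Γ_x (x ∈ B̂^×) is finite, so that the height pairing is defined. Then ⟨⟨φ·z, ψ·z⟩⟩ = ⟨⟨φ, ψ⟩⟩, where (φ·z)(x) = φ(zx). -/

import Mathlib

open NumberField Quaternion IsDedekindDomain

noncomputable section

/-- The finite adele ring of a number field. -/
abbrev Adeles (F : Type*) [Field F] [NumberField F] : Type _ :=
  FiniteAdeleRing (𝓞 F) F

/-- The adelization `B ⊗_F 𝔸`, modelled as a quaternion algebra over the adeles. -/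
abbrev Bhat (F : Type*) [Field F] [NumberField F] (a b : F) : Type _ :=
  ℍ[Adeles F, algebraMap F (Adeles F) a, algebraMap F (Adeles F) b]

/-- The canonical quaternionic basis of `Bhat`. -/
def quatBasis (F : Type*) [Field F] [NumberField F] (a b : F) :
    QuaternionAlgebra.Basis (Bhat F a b) a 0 b where
  i := ⟨0, 1, 0, 0⟩
  j := ⟨0, 0, 1, 0⟩
  k := ⟨0, 0, 0, 1⟩
  i_mul_i := by
    ext <;> simp [QuaternionAlgebra.ext_iff, Algebra.smul_def] <;> rfl
  j_mul_j := by
    ext <;> simp [QuaternionAlgebra.ext_iff, Algebra.smul_def] <;> rfl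
  i_mul_j := by
    ext <;> simp
  j_mul_i := by
    ext <;> simp

/-- The canonical embedding `B → B̂`. -/
def iotaB (F : Type*) [Field F] [NumberField F] (a b : F) :
    ℍ[F, a, b] →ₐ[F] Bhat F a b :=
  (quatBasis F a b).liftHom

/-- The integral adeles `Ô` inside the finite adeles. -/
def intAdeles (F : Type*) [Field F] [NumberField F] : Set (Adeles F) :=
  {x | ∀ v : HeightOneSpectrum (𝓞 F), x v ∈ v.adicCompletionIntegers F}

variable {F : Type*} [Field F] [NumberField F] {a b : F}

/-- `R̂`, the image of `R ⊗_𝒪 Ô` in `B̂`. -/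
def Rhat (R : Subring ℍ[F, a, b]) : Subring (Bhat F a b) :=
  Subring.closure
    {z | ∃ r ∈ R, ∃ o ∈ intAdeles F,
      z = algebraMap (Adeles F) (Bhat F a b) o * iotaB F a b r}

/-- `R̂ˣ` as a subgroup of `B̂ˣ`. -/
def Uhat (R : Subring ℍ[F, a, b]) : Subgroup (Bhat F a b)ˣ :=
  (Units.map (Rhat R).subtype.toMonoidHom).range

/-- The embedding `B^× → B̂^×`. -/
def gmap (F : Type*) [Field F] [NumberField F] (a b : F) :
    ℍ[F, a, b]ˣ →* (Bhat F a b)ˣ :=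
  Units.map (iotaB F a b).toRingHom.toMonoidHom

/-- `𝒪^×` as a subgroup of `B^×`. -/
def OunitsB (F : Type*) [Field F] [NumberField F] (a b : F) : Subgroup ℍ[F, a, b]ˣ :=
  (Units.map ((algebraMap F ℍ[F, a, b]).comp (algebraMap (𝓞 F) F)).toMonoidHom).range

/-- The set `B^× ∩ x⁻¹ R̂^× y` (inside `B^×`). -/
def GammaSet (R : Subring ℍ[F, a, b]) (x y : (Bhat F a b)ˣ) : Set ℍ[F, a, b]ˣ :=
  {γ | ∃ u ∈ Uhat R, gmap F a b γ = x⁻¹ * u * y}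

/-- `T` is a (finite) set of representatives for `Γ_{x,y} = (B^× ∩ x⁻¹ R̂^× y)/𝒪^×`. -/
def IsGammaReps (R : Subring ℍ[F, a, b]) (x y : (Bhat F a b)ˣ)
    (T : Finset ℍ[F, a, b]ˣ) : Prop :=
  ↑T ⊆ GammaSet R x y ∧
    ∀ γ ∈ GammaSet R x y, ∃! γ' : ℍ[F, a, b]ˣ,
      γ' ∈ T ∧ ∃ ε ∈ OunitsB F a b, γ = γ' * ε

variable {V : Type*} [AddCommGroup V] [Module ℂ V]

/-- `(V, act)` is a unitary right representation of `B^×/F^×`. -/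
def IsWeightRep (F : Type*) [Field F] [NumberField F] (a b : F)
    (act : V → ℍ[F, a, b]ˣ → V) : Prop :=
  (∀ v, act v 1 = v) ∧
  (∀ v γ₁ γ₂, act (act v γ₁) γ₂ = act v (γ₁ * γ₂)) ∧
  (∀ γ, IsLinearMap ℂ (fun v => act v γ)) ∧
  (∀ (v : V) (c : Fˣ), act v (Units.map (algebraMap F ℍ[F, a, b]).toMonoidHom c) = v)

/-- `φ` is the quaternionic modular form `φ_{x,v}`. -/
def IsPhi (R : Subring ℍ[F, a, b]) (act : V → ℍ[F, a, b]ˣ → V)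
    (x : (Bhat F a b)ˣ) (v : V) (φ : (Bhat F a b)ˣ → V) : Prop :=
  ∀ y : (Bhat F a b)ˣ, ∃ T : Finset ℍ[F, a, b]ˣ,
    IsGammaReps R x y T ∧ φ y = ∑ γ ∈ T, act v γ

/-- `φ` is a quaternionic modular form of weight `act` and level `R`. -/
def IsQMF (R : Subring ℍ[F, a, b]) (act : V → ℍ[F, a, b]ˣ → V)
    (φ : (Bhat F a b)ˣ → V) : Prop :=
  ∀ u ∈ Uhat R, ∀ (γ : ℍ[F, a, b]ˣ) (y : (Bhat F a b)ˣ),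
    φ (u * y * gmap F a b γ) = act (φ y) γ

/-- `z` normalizes `R̂`. -/
def Normalizes (R : Subring ℍ[F, a, b]) (z : (Bhat F a b)ˣ) : Prop :=
  (fun w => ((z⁻¹ : (Bhat F a b)ˣ) : Bhat F a b) * w * (z : Bhat F a b)) ''
      ((Rhat R : Set (Bhat F a b))) = (Rhat R : Set (Bhat F a b))

/-- The order `R_x = B ∩ x⁻¹ R̂ x`. -/
def Rx (R : Subring ℍ[F, a, b]) (x : (Bhat F a b)ˣ) : Set ℍ[F, a, b] :=
  {w | ∃ r ∈ Rhat R, iotaB F a b w = ((x⁻¹ : (Bhat F a b)ˣ) : Bhat F a b) * r * (x : Bhat F a b)}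

/-- The unit group `R_x^×` inside `B^×`. -/
def RxUnits (R : Subring ℍ[F, a, b]) (x : (Bhat F a b)ˣ) : Set ℍ[F, a, b]ˣ :=
  {γ | ((γ : ℍ[F, a, b]) ∈ Rx R x) ∧ (((γ⁻¹ : ℍ[F, a, b]ˣ) : ℍ[F, a, b]) ∈ Rx R x)}

/-- `T` is a set of representatives for `Γ_x = R_x^×/𝒪^×`; in particular `t_x = T.card`. -/
def IsStabReps (R : Subring ℍ[F, a, b]) (x : (Bhat F a b)ˣ)
    (T : Finset ℍ[F, a, b]ˣ) : Prop :=
  ↑T ⊆ RxUnits R x ∧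
    ∀ γ ∈ RxUnits R x, ∃! γ' : ℍ[F, a, b]ˣ,
      γ' ∈ T ∧ ∃ ε ∈ OunitsB F a b, γ = γ' * ε

/-- `xs` is a set of representatives for `Cl(R) = R̂^× \ B̂^× / B^×`. -/
def IsClassReps (R : Subring ℍ[F, a, b]) (xs : Finset (Bhat F a b)ˣ) : Prop :=
  ∀ y : (Bhat F a b)ˣ, ∃! x : (Bhat F a b)ˣ,
    x ∈ xs ∧ ∃ u ∈ Uhat R, ∃ γ : ℍ[F, a, b]ˣ, y = u * x * gmap F a b γ

/-- The reduced norm of a quaternion over a commutative ring. -/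
def nrd {R : Type*} [CommRing R] {c₁ c₂ : R} (x : ℍ[R, c₁, c₂]) : R :=
  x.re ^ 2 - c₁ * x.imI ^ 2 - c₂ * x.imJ ^ 2 + c₁ * c₂ * x.imK ^ 2

/-- The set `H_𝔪 = {h ∈ B̂^× ∩ R̂ : Ô·n(h) ∩ 𝒪 = 𝔪}`. -/
def Hset (R : Subring ℍ[F, a, b]) (𝔪 : Ideal (𝓞 F)) : Set (Bhat F a b)ˣ :=
  {h | ((h : Bhat F a b) ∈ Rhat R) ∧
    {c : 𝓞 F | ∃ o ∈ intAdeles F,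
        algebraMap F (Adeles F) (algebraMap (𝓞 F) F c) = o * nrd (h : Bhat F a b)}
      = (𝔪 : Set (𝓞 F))}

/-- `T` is a set of representatives for the left cosets `R̂^× \ H_𝔪`. -/
def IsHeckeLeftReps (R : Subring ℍ[F, a, b]) (𝔪 : Ideal (𝓞 F))
    (T : Finset (Bhat F a b)ˣ) : Prop :=
  ↑T ⊆ Hset R 𝔪 ∧
    ∀ h ∈ Hset R 𝔪, ∃! h' : (Bhat F a b)ˣ, h' ∈ T ∧ ∃ u ∈ Uhat R, h = u * h'

/-- `T` is a set of representatives for the right cosets `H_𝔪 / R̂^×`. -/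
def IsHeckeRightReps (R : Subring ℍ[F, a, b]) (𝔪 : Ideal (𝓞 F))
    (T : Finset (Bhat F a b)ˣ) : Prop :=
  ↑T ⊆ Hset R 𝔪 ∧
    ∀ h ∈ Hset R 𝔪, ∃! h' : (Bhat F a b)ˣ, h' ∈ T ∧ ∃ u ∈ Uhat R, h = h' * u

end


section MyAux

variable {F : Type*} [Field F] [NumberField F] {a b : F}

lemma myMemUhat (R : Subring ℍ[F, a, b]) (u : (Bhat F a b)ˣ) :
    u ∈ Uhat R ↔ ((u : Bhat F a b) ∈ Rhat R ∧
      ((u⁻¹ : (Bhat F a b)ˣ) : Bhat F a b) ∈ Rhat R) := by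
  constructor
  · rintro ⟨w, rfl⟩
    constructor
    · rw [Units.coe_map]
      exact SetLike.coe_mem _
    · rw [← map_inv, Units.coe_map]
      exact SetLike.coe_mem _
  · rintro ⟨h1, h2⟩
    refine ⟨⟨⟨(u : Bhat F a b), h1⟩, ⟨((u⁻¹ : (Bhat F a b)ˣ) : Bhat F a b), h2⟩, ?_, ?_⟩, ?_⟩
    · exact Subtype.ext (u.mul_inv)
    · exact Subtype.ext (u.inv_mul)
    · exact Units.ext rfl

lemma myOunitsComm {ε : ℍ[F, a, b]ˣ} (hε : ε ∈ OunitsB F a b) (γ : ℍ[F, a, b]ˣ) :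
    γ * ε = ε * γ := by
  obtain ⟨c, rfl⟩ := hε
  apply Units.ext
  simp only [Units.val_mul, Units.coe_map, RingHom.toMonoidHom_eq_coe, MonoidHom.coe_coe,
    RingHom.coe_comp, Function.comp_apply]
  exact (Algebra.commutes (A := ℍ[F, a, b]) (algebraMap (𝓞 F) F ↑c) ↑γ).symm

lemma myRepsCard {G : Type*} [Group G] (S : Set G) (O : Subgroup G)
    (T₁ T₂ : Finset G)
    (h₁s : ↑T₁ ⊆ S) (h₁ : ∀ γ ∈ S, ∃! γ' : G, γ' ∈ T₁ ∧ ∃ ε ∈ O, γ = γ' * ε)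
    (h₂s : ↑T₂ ⊆ S) (h₂ : ∀ γ ∈ S, ∃! γ' : G, γ' ∈ T₂ ∧ ∃ ε ∈ O, γ = γ' * ε) :
    T₁.card = T₂.card := by
  classical
  have key : ∀ (Ta Tb : Finset G), ↑Ta ⊆ S →
      (∀ γ ∈ S, ∃! γ' : G, γ' ∈ Ta ∧ ∃ ε ∈ O, γ = γ' * ε) →
      (∀ γ ∈ S, ∃! γ' : G, γ' ∈ Tb ∧ ∃ ε ∈ O, γ = γ' * ε) →
      Ta.card ≤ Tb.card := by
    intro Ta Tb hTa ha hb
    refine Finset.card_le_card_of_injOn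
      (fun γ => if h : γ ∈ S then (hb γ h).choose else 1) ?_ ?_
    · intro γ hγ
      show (if h : γ ∈ S then (hb γ h).choose else 1) ∈ Tb
      rw [dif_pos (hTa hγ)]
      exact ((hb γ (hTa hγ)).choose_spec.1).1
    · intro γ₁ hγ₁ γ₂ hγ₂ heq
      have hm1 : γ₁ ∈ S := hTa hγ₁
      have hm2 : γ₂ ∈ S := hTa hγ₂
      simp only [dif_pos hm1, dif_pos hm2] at heq
      obtain ⟨hc1, ε₁, hε₁, he1⟩ := (hb γ₁ hm1).choose_spec.1
      obtain ⟨hc2, ε₂, hε₂, he2⟩ := (hb γ₂ hm2).choose_spec.1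
      have hkey : γ₁ = γ₂ * (ε₂⁻¹ * ε₁) := by
        rw [he1, he2, heq]
        group
      exact (ha γ₁ hm1).unique ⟨hγ₁, 1, O.one_mem, (mul_one _).symm⟩
        ⟨hγ₂, ε₂⁻¹ * ε₁, O.mul_mem (O.inv_mem hε₂) hε₁, hkey⟩
  exact le_antisymm (key T₁ T₂ h₁s h₁ h₂) (key T₂ T₁ h₂s h₂ h₁)

end MyAux

/-- the height pairing is invariant under the action of the normalizer:
`⟨⟨φ·z, ψ·z⟩⟩ = ⟨⟨φ, ψ⟩⟩`. -/
theorem statement_12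
    {F : Type*} [Field F] [NumberField F]
    (htr : ∀ φ : F →+* ℂ, ∀ x : F, (φ x).im = 0)
    {a b : F} (ha0 : a ≠ 0) (hb0 : b ≠ 0)
    (ha : ∀ τ : F →+* ℝ, τ a < 0) (hb : ∀ τ : F →+* ℝ, τ b < 0)
    (R : Subring ℍ[F, a, b])
    (hRO : ∀ c : NumberField.RingOfIntegers F,
      algebraMap F ℍ[F, a, b] (algebraMap (NumberField.RingOfIntegers F) F c) ∈ R)
    (hRfg : (Submodule.span (NumberField.RingOfIntegers F) (R : Set ℍ[F, a, b])).FG)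
    (hRspan : Submodule.span F (R : Set ℍ[F, a, b]) = ⊤)
    {V : Type*} [AddCommGroup V] [Module ℂ V]
    (act : V → ℍ[F, a, b]ˣ → V) (hact : IsWeightRep F a b act)

    (herm : V → V → ℂ)
    (herm_add : ∀ v₁ v₂ w : V, herm (v₁ + v₂) w = herm v₁ w + herm v₂ w)
    (herm_smul : ∀ (c : ℂ) (v w : V), herm (c • v) w = c * herm v w)
    (herm_conj : ∀ v w : V, herm w v = starRingEnd ℂ (herm v w))
    (herm_pos : ∀ v : V, v ≠ 0 → 0 < (herm v v).re)
    (herm_unitary : ∀ (v w : V) (γ : ℍ[F, a, b]ˣ), herm (act v γ) (act w γ) = herm v w)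
    (z : (Bhat F a b)ˣ) (hz : Normalizes R z)
    (φ ψ : (Bhat F a b)ˣ → V) (hφ : IsQMF R act φ) (hψ : IsQMF R act ψ)
    (xs : Finset (Bhat F a b)ˣ) (hcl : IsClassReps R xs)
    (Tx : (Bhat F a b)ˣ → Finset ℍ[F, a, b]ˣ)
    (hTx : ∀ x ∈ xs, IsStabReps R x (Tx x))
    (hstab : ∀ x : (Bhat F a b)ˣ, ∃ T : Finset ℍ[F, a, b]ˣ, IsStabReps R x T) :
    ∑ x ∈ xs, ((Tx x).card : ℂ)⁻¹ * herm (φ (z * x)) (ψ (z * x))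
      = ∑ x ∈ xs, ((Tx x).card : ℂ)⁻¹ * herm (φ x) (ψ x) := by
  classical
  -- conjugation by z preserves Rhat
  have hconj1 : ∀ w ∈ Rhat R,
      ((z⁻¹ : (Bhat F a b)ˣ) : Bhat F a b) * w * (z : Bhat F a b) ∈ Rhat R := by
    intro w hw
    have h := Set.mem_image_of_mem
      (fun w => ((z⁻¹ : (Bhat F a b)ˣ) : Bhat F a b) * w * (z : Bhat F a b)) hw
    rw [hz] at h
    exact h
  have hconj2 : ∀ w ∈ Rhat R,
      (z : Bhat F a b) * w * ((z⁻¹ : (Bhat F a b)ˣ) : Bhat F a b) ∈ Rhat R := by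
    intro w hw
    have h : w ∈ (fun w => ((z⁻¹ : (Bhat F a b)ˣ) : Bhat F a b) * w * (z : Bhat F a b)) ''
        (Rhat R : Set (Bhat F a b)) := by rw [hz]; exact hw
    obtain ⟨r, hr, hrw⟩ := h
    have he : (z : Bhat F a b) * w * ((z⁻¹ : (Bhat F a b)ˣ) : Bhat F a b) = r := by
      rw [← hrw]
      simp [mul_assoc]
    rwa [he]
  -- conjugation by z preserves Uhat
  have hUconj : ∀ u ∈ Uhat R, z⁻¹ * u * z ∈ Uhat R ∧ z * u * z⁻¹ ∈ Uhat R := by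
    intro u hu
    rw [myMemUhat] at hu
    constructor
    · rw [myMemUhat]
      constructor
      · simpa [Units.val_mul, mul_assoc] using hconj1 _ hu.1
      · have e : (z⁻¹ * u * z)⁻¹ = z⁻¹ * u⁻¹ * z := by group
        rw [e]
        simpa [Units.val_mul, mul_assoc] using hconj1 _ hu.2
    · rw [myMemUhat]
      constructor
      · simpa [Units.val_mul, mul_assoc] using hconj2 _ hu.1
      · have e : (z * u * z⁻¹)⁻¹ = z * u⁻¹ * z⁻¹ := by group
        rw [e]
        simpa [Units.val_mul, mul_assoc] using hconj2 _ hu.2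
  have hGcoe : ∀ γ : ℍ[F, a, b]ˣ,
      iotaB F a b (γ : ℍ[F, a, b]) = ((gmap F a b γ : (Bhat F a b)ˣ) : Bhat F a b) :=
    fun _ => rfl
  have hGinv : ∀ γ : ℍ[F, a, b]ˣ,
      iotaB F a b ((γ⁻¹ : ℍ[F, a, b]ˣ) : ℍ[F, a, b])
        = (((gmap F a b γ)⁻¹ : (Bhat F a b)ˣ) : Bhat F a b) := by
    intro γ
    rw [hGcoe γ⁻¹, map_inv]
  -- R_{zx} = R_x
  have hRxz : ∀ x : (Bhat F a b)ˣ, Rx R (z * x) = Rx R x := by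
    intro x
    ext w
    simp only [Rx, Set.mem_setOf_eq]
    constructor
    · rintro ⟨r, hr, hw⟩
      refine ⟨_, hconj1 r hr, ?_⟩
      rw [hw]
      simp [mul_inv_rev, Units.val_mul, mul_assoc]
    · rintro ⟨r, hr, hw⟩
      refine ⟨_, hconj2 r hr, ?_⟩
      rw [hw]
      simp [mul_inv_rev, Units.val_mul, mul_assoc]
  have hRxUz : ∀ x : (Bhat F a b)ˣ, RxUnits R (z * x) = RxUnits R x := by
    intro x
    unfold RxUnits
    rw [hRxz]
  -- conjugation description of R_{u x' γ}
  have hRxconj : ∀ (x' u : (Bhat F a b)ˣ), (u : Bhat F a b) ∈ Rhat R →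
      ((u⁻¹ : (Bhat F a b)ˣ) : Bhat F a b) ∈ Rhat R →
      ∀ (γ : ℍ[F, a, b]ˣ) (w : ℍ[F, a, b]),
      w ∈ Rx R (u * x' * gmap F a b γ) ↔
        (γ : ℍ[F, a, b]) * w * ((γ⁻¹ : ℍ[F, a, b]ˣ) : ℍ[F, a, b]) ∈ Rx R x' := by
    intro x' u hu1 hu2 γ w
    simp only [Rx, Set.mem_setOf_eq]
    constructor
    · rintro ⟨r, hr, hw⟩
      refine ⟨((u⁻¹ : (Bhat F a b)ˣ) : Bhat F a b) * r * (u : Bhat F a b),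
        (Rhat R).mul_mem ((Rhat R).mul_mem hu2 hr) hu1, ?_⟩
      rw [map_mul, map_mul, hw, hGcoe, hGinv]
      simp [mul_inv_rev, Units.val_mul, mul_assoc]
    · rintro ⟨r, hr, hw⟩
      refine ⟨(u : Bhat F a b) * r * ((u⁻¹ : (Bhat F a b)ˣ) : Bhat F a b),
        (Rhat R).mul_mem ((Rhat R).mul_mem hu1 hr) hu2, ?_⟩
      have hw' : ((gmap F a b γ : (Bhat F a b)ˣ) : Bhat F a b) * iotaB F a b w *
          (((gmap F a b γ)⁻¹ : (Bhat F a b)ˣ) : Bhat F a b)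
          = ((x'⁻¹ : (Bhat F a b)ˣ) : Bhat F a b) * r * (x' : Bhat F a b) := by
        rw [← hGcoe, ← hGinv, ← map_mul, ← map_mul]
        exact hw
      have hw2 : iotaB F a b w = (((gmap F a b γ)⁻¹ : (Bhat F a b)ˣ) : Bhat F a b) *
          (((x'⁻¹ : (Bhat F a b)ˣ) : Bhat F a b) * r * (x' : Bhat F a b)) *
          ((gmap F a b γ : (Bhat F a b)ˣ) : Bhat F a b) := by
        rw [← hw']
        simp [mul_assoc]
      rw [hw2]
      simp [mul_inv_rev, Units.val_mul, mul_assoc]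
  have hRxUconj : ∀ (x' u : (Bhat F a b)ˣ), (u : Bhat F a b) ∈ Rhat R →
      ((u⁻¹ : (Bhat F a b)ˣ) : Bhat F a b) ∈ Rhat R →
      ∀ (γ γ₀ : ℍ[F, a, b]ˣ),
      (γ₀ ∈ RxUnits R (u * x' * gmap F a b γ) ↔ γ * γ₀ * γ⁻¹ ∈ RxUnits R x') := by
    intro x' u hu1 hu2 γ γ₀
    simp only [RxUnits, Set.mem_setOf_eq]
    rw [hRxconj x' u hu1 hu2 γ, hRxconj x' u hu1 hu2 γ]
    simp [Units.val_mul, mul_inv_rev, inv_inv, mul_assoc]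
  -- representative maps
  have clspec : ∀ y : (Bhat F a b)ˣ,
      ((hcl y).choose ∈ xs ∧ ∃ u ∈ Uhat R, ∃ γ : ℍ[F, a, b]ˣ,
        y = u * (hcl y).choose * gmap F a b γ) ∧
      ∀ x₀ : (Bhat F a b)ˣ, (x₀ ∈ xs ∧ ∃ u ∈ Uhat R, ∃ γ : ℍ[F, a, b]ˣ,
        y = u * x₀ * gmap F a b γ) → x₀ = (hcl y).choose :=
    fun y => ⟨(hcl y).choose_spec.1, (hcl y).choose_spec.2⟩
  have hi : ∀ x ∈ xs, (hcl (z * x)).choose ∈ xs := fun x _ => (clspec (z * x)).1.1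
  have hj : ∀ x ∈ xs, (hcl (z⁻¹ * x)).choose ∈ xs := fun x _ => (clspec (z⁻¹ * x)).1.1
  have hji : ∀ x ∈ xs, (hcl (z⁻¹ * (hcl (z * x)).choose)).choose = x := by
    intro x hx
    obtain ⟨u, hu, γ, h⟩ := (clspec (z * x)).1.2
    set x' := (hcl (z * x)).choose with hx'def
    have hx'1 : x' = u⁻¹ * (z * x) * (gmap F a b γ)⁻¹ := by rw [h]; group
    have hx2 : z⁻¹ * x' = (z⁻¹ * u⁻¹ * z) * x * gmap F a b γ⁻¹ := by
      rw [hx'1, map_inv]; group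
    exact ((clspec (z⁻¹ * x')).2 x
      ⟨hx, z⁻¹ * u⁻¹ * z, (hUconj u⁻¹ ((Uhat R).inv_mem hu)).1, γ⁻¹, hx2⟩).symm
  have hij : ∀ x ∈ xs, (hcl (z * (hcl (z⁻¹ * x)).choose)).choose = x := by
    intro x hx
    obtain ⟨u, hu, γ, h⟩ := (clspec (z⁻¹ * x)).1.2
    set x' := (hcl (z⁻¹ * x)).choose with hx'def
    have hx'1 : x' = u⁻¹ * (z⁻¹ * x) * (gmap F a b γ)⁻¹ := by rw [h]; group
    have hx2 : z * x' = (z * u⁻¹ * z⁻¹) * x * gmap F a b γ⁻¹ := by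
      rw [hx'1, map_inv]; group
    exact ((clspec (z * x')).2 x
      ⟨hx, z * u⁻¹ * z⁻¹, (hUconj u⁻¹ ((Uhat R).inv_mem hu)).2, γ⁻¹, hx2⟩).symm
  have hterm : ∀ x ∈ xs,
      ((Tx x).card : ℂ)⁻¹ * herm (φ (z * x)) (ψ (z * x))
        = ((Tx ((hcl (z * x)).choose)).card : ℂ)⁻¹ *
            herm (φ ((hcl (z * x)).choose)) (ψ ((hcl (z * x)).choose)) := by
    intro x hx
    obtain ⟨u, hu, γ, h⟩ := (clspec (z * x)).1.2
    set x' := (hcl (z * x)).choose with hx'def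
    have hx's : x' ∈ xs := (clspec (z * x)).1.1
    -- value part
    have hφv : φ (z * x) = act (φ x') γ := by rw [h]; exact hφ u hu γ x'
    have hψv : ψ (z * x) = act (ψ x') γ := by rw [h]; exact hψ u hu γ x'
    have hval : herm (φ (z * x)) (ψ (z * x)) = herm (φ x') (ψ x') := by
      rw [hφv, hψv, herm_unitary]
    -- cardinality part
    obtain ⟨hu1, hu2⟩ := (myMemUhat R u).mp hu
    have hiff : ∀ γ₀ : ℍ[F, a, b]ˣ, γ₀ ∈ RxUnits R x ↔ γ * γ₀ * γ⁻¹ ∈ RxUnits R x' := by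
      intro γ₀
      rw [← hRxUz x, h]
      exact hRxUconj x' u hu1 hu2 γ γ₀
    have hTxx := hTx x hx
    have hTxx' := hTx x' hx's
    have hinj : Function.Injective (fun γ₀ : ℍ[F, a, b]ˣ => γ * γ₀ * γ⁻¹) := by
      intro p q hpq
      have h2 := congrArg (fun t => γ⁻¹ * t * γ) hpq
      simp only at h2
      calc p = γ⁻¹ * (γ * p * γ⁻¹) * γ := by group
        _ = γ⁻¹ * (γ * q * γ⁻¹) * γ := h2
        _ = q := by group
    have hT'card : ((Tx x).image (fun γ₀ => γ * γ₀ * γ⁻¹)).card = (Tx x).card :=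
      Finset.card_image_of_injective _ hinj
    -- the image is a set of stabilizer representatives for x'
    have hT'sub : ↑((Tx x).image (fun γ₀ => γ * γ₀ * γ⁻¹)) ⊆ RxUnits R x' := by
      intro γ₁ hγ₁
      simp only [Finset.coe_image, Set.mem_image, Finset.mem_coe] at hγ₁
      obtain ⟨γ₀, hγ₀, rfl⟩ := hγ₁
      exact (hiff γ₀).mp (hTxx.1 hγ₀)
    have hT'reps : ∀ δ ∈ RxUnits R x', ∃! γ' : ℍ[F, a, b]ˣ,
        γ' ∈ (Tx x).image (fun γ₀ => γ * γ₀ * γ⁻¹) ∧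
          ∃ ε ∈ OunitsB F a b, δ = γ' * ε := by
      intro δ hδ
      have hδ0 : γ⁻¹ * δ * γ ∈ RxUnits R x := by
        rw [hiff (γ⁻¹ * δ * γ)]
        have e : γ * (γ⁻¹ * δ * γ) * γ⁻¹ = δ := by group
        rwa [e]
      obtain ⟨γ₀, ⟨hγ₀T, ε, hε, hδε⟩, huniq⟩ := hTxx.2 (γ⁻¹ * δ * γ) hδ0
      refine ⟨γ * γ₀ * γ⁻¹, ⟨Finset.mem_image_of_mem _ hγ₀T, ε, hε, ?_⟩, ?_⟩
      · have h1 : δ = γ * (γ₀ * ε) * γ⁻¹ := by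
          rw [← hδε]; group
        have h2 : ε * γ⁻¹ = γ⁻¹ * ε := (myOunitsComm hε γ⁻¹).symm
        rw [h1]
        calc γ * (γ₀ * ε) * γ⁻¹ = γ * γ₀ * (ε * γ⁻¹) := by group
          _ = γ * γ₀ * (γ⁻¹ * ε) := by rw [h2]
          _ = γ * γ₀ * γ⁻¹ * ε := by group
      · rintro γ₁ ⟨hγ₁T, ε₁, hε₁, hδ₁⟩
        obtain ⟨γ₂, hγ₂T, rfl⟩ := Finset.mem_image.mp hγ₁T
        have hcomm : γ⁻¹ * ε₁ * γ = ε₁ := by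
          rw [myOunitsComm hε₁ γ⁻¹]; group
        have hcand : γ⁻¹ * δ * γ = γ₂ * ε₁ := by
          rw [hδ₁]
          calc γ⁻¹ * (γ * γ₂ * γ⁻¹ * ε₁) * γ = γ₂ * (γ⁻¹ * ε₁ * γ) := by group
            _ = γ₂ * ε₁ := by rw [hcomm]
        have : γ₂ = γ₀ := huniq γ₂ ⟨hγ₂T, ε₁, hε₁, hcand⟩
        rw [this]
    have hcard : (Tx x).card = (Tx x').card := by
      rw [← hT'card]
      exact myRepsCard (RxUnits R x') (OunitsB F a b)
        ((Tx x).image (fun γ₀ => γ * γ₀ * γ⁻¹)) (Tx x') hT'sub hT'reps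
        hTxx'.1 hTxx'.2
    rw [hval, hcard]
  exact Finset.sum_nbij' (fun x => (hcl (z * x)).choose)
    (fun x => (hcl (z⁻¹ * x)).choose) hi hj hji hij hterm
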